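/- For binary Y and Z and n-valued X (n ≥ 2), the set of Markov kernels K(X,Y|Z) satisfying the IV inequalities is a polytope whose extreme points are exactly: (i) the kernels δ_{x,y|0} + δ_{x',y'|1} with x ≠ x' (deterministic kernels assigning point mass (x,y) given Z=0 and (x',y') given Z=1 with different treatment values), and (ii) the kernels δ_{x,y|0} + δ_{x,y|1} (the same point mass (x,y) for both values of Z). -/

import Mathlib

/-- The polytope of Markov kernels `K(X,Y|Z)` (binary `Y`, `Z`; `X` taking
values in `Fin n`) satisfying the IV inequalities.  `K x y z` denotes
`K(X=x, Y=y | Z=z)`. -/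
def IVPolytope (n : ℕ) : Set (Fin n → Bool → Bool → ℝ) :=
  {K | (∀ x y z, 0 ≤ K x y z) ∧ (∀ z, ∑ x, ∑ y, K x y z = 1) ∧
       (∀ x, K x false false + K x true true ≤ 1 ∧
             K x false true + K x true false ≤ 1)}

/-- The kernel putting point mass on `(x,y)` given `Z = 0` (i.e. `false`)
and point mass on `(x',y')` given `Z = 1` (i.e. `true`). -/
def deltaKernel {n : ℕ} (x x' : Fin n) (y y' : Bool) : Fin n → Bool → Bool → ℝ :=
  fun a b z =>
    if z = false then (if a = x ∧ b = y then 1 else 0)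
    else (if a = x' ∧ b = y' then 1 else 0)

namespace IVaux
variable {n : ℕ} {K : Fin n → Bool → Bool → ℝ}

lemma hC (hK : K ∈ IVPolytope n) (x : Fin n) (c : Bool) :
    K x c false + K x (!c) true ≤ 1 := by
  cases c
  · exact (hK.2.2 x).1
  · simpa [add_comm] using (hK.2.2 x).2

lemma pairC_le (hK : K ∈ IVPolytope n) (a : Fin n) (b c : Bool) :
    K a b c + K a (!b) (!c) ≤ 1 := by
  cases c
  · simpa using hC hK a b
  · simpa [add_comm] using hC hK a (!b)

noncomputable def ind (a : Fin n) (b c : Bool) : Fin n → Bool → Bool → ℝ :=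
  fun x y z => if x = a ∧ y = b ∧ z = c then 1 else 0

lemma ind_sum (a : Fin n) (b c z : Bool) :
    ∑ x, ∑ y, ind a b c x y z = if z = c then 1 else 0 := by
  by_cases hz : z = c <;> simp [ind, hz, ite_and, Finset.sum_ite_eq']

lemma cons (a : Fin n) (b c : Bool) (x : Fin n) (e : Bool) :
    ind a b c x e false + ind a b c x (!e) true =
      if x = a ∧ e = (if c then !b else b) then 1 else 0 := by
  cases b <;> cases c <;> cases e <;> simp [ind]

lemma cons_partner (a : Fin n) (b c : Bool) (x : Fin n) (e : Bool) :
    ind a b c x e false + ind a b c x (!e) true =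
      ind a (!b) (!c) x e false + ind a (!b) (!c) x (!e) true := by
  cases b <;> cases c <;> cases e <;> simp [ind]

lemma cons_val (a : Fin n) (b c : Bool) (x : Fin n) (e : Bool)
    (h : x = a ∧ e = (if c then !b else b)) :
    K x e false + K x (!e) true = K a b c + K a (!b) (!c) := by
  obtain ⟨rfl, rfl⟩ := h
  cases c <;> cases b <;> simp [add_comm]


lemma total_eq (hK : K ∈ IVPolytope n) (z : Bool) :
    ∑ p : Fin n × Bool, K p.1 p.2 z = 1 := by
  rw [← Finset.univ_product_univ, Finset.sum_product (f := fun p : Fin n × Bool => K p.1 p.2 z)]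
  exact hK.2.1 z

lemma pair_le (hK : K ∈ IVPolytope n) {a a' : Fin n} {b b' : Bool} (z : Bool)
    (h : (a, b) ≠ (a', b')) : K a b z + K a' b' z ≤ 1 := by
  have h1 := total_eq hK z
  have h2 : ∑ p ∈ ({(a,b), (a',b')} : Finset (Fin n × Bool)), K p.1 p.2 z
      ≤ ∑ p : Fin n × Bool, K p.1 p.2 z := by
    apply Finset.sum_le_sum_of_subset_of_nonneg (Finset.subset_univ _)
    intro p _ _; exact hK.1 p.1 p.2 z
  rwa [Finset.sum_pair h, h1] at h2

lemma entry_le_one (hK : K ∈ IVPolytope n) (a : Fin n) (b z : Bool) :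
    K a b z ≤ 1 := by
  have h1 := total_eq hK z
  have := Finset.single_le_sum (f := fun p : Fin n × Bool => K p.1 p.2 z)
    (fun p _ => hK.1 p.1 p.2 z) (Finset.mem_univ (a, b))
  simpa [h1] using this

/-- second fractional entry in a stratum with a fractional entry -/
lemma frac2 (hK : K ∈ IVPolytope n) {a : Fin n} {b : Bool} (z : Bool)
    (h0 : 0 < K a b z) (h1 : K a b z < 1) :
    ∃ a' b', (a', b') ≠ (a, b) ∧ 0 < K a' b' z ∧ K a' b' z < 1 := by
  by_contra hcon
  push_neg at hcon
  have hall : ∀ a' b', (a', b') ≠ (a, b) → K a' b' z = 0 := by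
    intro a' b' hne
    rcases lt_or_eq_of_le (hK.1 a' b' z) with hpos | he
    · have hlt := hcon a' b' hne hpos
      have := pair_le hK z (Ne.symm hne)
      linarith
    · exact he.symm
  have h1' := total_eq hK z
  have : ∑ p : Fin n × Bool, K p.1 p.2 z = K a b z := by
    rw [Finset.sum_eq_single (a, b)]
    · intro p _ hp
      exact hall p.1 p.2 (by simpa [Prod.ext_iff] using hp)
    · simp
  rw [this] at h1'
  linarith


/-- Key perturbation lemma: a feasible perturbation direction at an extreme
point must be zero. -/
lemma key (hext : K ∈ Set.extremePoints ℝ (IVPolytope n))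
    (D : Fin n → Bool → Bool → ℝ)
    (hsum : ∀ z, ∑ x, ∑ y, D x y z = 0)
    (hpos : ∀ x y z, D x y z ≠ 0 → 0 < K x y z)
    (hiv : ∀ x c, D x c false + D x (!c) true = 0 ∨
       K x c false + K x (!c) true < 1) :
    D = 0 := by
  classical
  have hK := hext.1
  by_contra hD
  -- get a nonzero coordinate (gives nonemptiness of Fin n)
  have hex : ∃ x y z, D x y z ≠ 0 := by
    by_contra h
    push_neg at h
    exact hD (by funext x y z; exact h x y z)
  obtain ⟨x₀, y₀, z₀, hx₀⟩ := hex
  haveI : Nonempty (Fin n) := ⟨x₀⟩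
  -- define epsilon
  set g1 : Fin n × Bool × Bool → ℝ := fun p =>
    if D p.1 p.2.1 p.2.2 ≠ 0 then K p.1 p.2.1 p.2.2 / |D p.1 p.2.1 p.2.2| else 1 with hg1
  set g2 : Fin n × Bool → ℝ := fun q =>
    if D q.1 q.2 false + D q.1 (!q.2) true ≠ 0 then
      (1 - (K q.1 q.2 false + K q.1 (!q.2) true)) / |D q.1 q.2 false + D q.1 (!q.2) true|
    else 1 with hg2
  set ε : ℝ := min (Finset.univ.inf' Finset.univ_nonempty g1)
      (Finset.univ.inf' Finset.univ_nonempty g2) with hε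
  have hεpos : 0 < ε := by
    apply lt_min
    · rw [Finset.lt_inf'_iff]
      rintro ⟨a, b, c⟩ -
      simp only [hg1]
      split_ifs with h
      · exact div_pos (hpos a b c h) (abs_pos.2 h)
      · exact one_pos
    · rw [Finset.lt_inf'_iff]
      rintro ⟨a, c⟩ -
      simp only [hg2]
      split_ifs with h
      · rcases hiv a c with h0 | hlt
        · exact absurd h0 h
        · exact div_pos (by linarith) (abs_pos.2 h)
      · exact one_pos
  have hε1 : ∀ a b c, ε * |D a b c| ≤ K a b c := by
    intro a b c
    by_cases h : D a b c = 0
    · simp [h]; exact hK.1 a b c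
    · have hle : ε ≤ g1 (a, b, c) :=
        le_trans (min_le_left _ _) (Finset.inf'_le _ (Finset.mem_univ _))
      simp only [hg1, if_pos h] at hle
      have habs : 0 < |D a b c| := abs_pos.2 h
      calc ε * |D a b c| ≤ (K a b c / |D a b c|) * |D a b c| := by
            exact mul_le_mul_of_nonneg_right hle habs.le
        _ = K a b c := div_mul_cancel₀ _ habs.ne'
  have hε2 : ∀ a c, K a c false + K a (!c) true
      + ε * |D a c false + D a (!c) true| ≤ 1 := by
    intro a c
    by_cases h : D a c false + D a (!c) true = 0
    · simp [h]; exact hC hK a c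
    · have hle : ε ≤ g2 (a, c) :=
        le_trans (min_le_right _ _) (Finset.inf'_le _ (Finset.mem_univ _))
      simp only [hg2, if_pos h] at hle
      have habs : 0 < |D a c false + D a (!c) true| := abs_pos.2 h
      have : ε * |D a c false + D a (!c) true|
          ≤ 1 - (K a c false + K a (!c) true) := by
        calc ε * |D a c false + D a (!c) true|
            ≤ ((1 - (K a c false + K a (!c) true)) / |D a c false + D a (!c) true|)
              * |D a c false + D a (!c) true| := mul_le_mul_of_nonneg_right hle habs.le
          _ = 1 - (K a c false + K a (!c) true) := div_mul_cancel₀ _ habs.ne'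
      linarith
  -- both perturbations are feasible
  have hmem : ∀ s : ℝ, s = 1 ∨ s = -1 → K + (s * ε) • D ∈ IVPolytope n := by
    intro s hs
    have hsabs : |s| = 1 := by rcases hs with h | h <;> simp [h]
    refine ⟨?_, ?_, ?_⟩
    · intro a b c
      have h1 := hε1 a b c
      have h2 : |s * ε * D a b c| ≤ K a b c := by
        rw [abs_mul, abs_mul, hsabs, one_mul, abs_of_pos hεpos]
        exact h1
      have := neg_abs_le (s * ε * D a b c)
      have hnn := hK.1 a b c
      simp only [Pi.add_apply, Pi.smul_apply, smul_eq_mul]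
      linarith
    · intro z
      simp only [Pi.add_apply, Pi.smul_apply, smul_eq_mul]
      rw [Finset.sum_congr rfl (fun x _ => Finset.sum_add_distrib)]
      rw [Finset.sum_add_distrib, hK.2.1 z]
      have : ∑ x, ∑ y, s * ε * D x y z = s * ε * ∑ x, ∑ y, D x y z := by
        rw [Finset.mul_sum]
        exact Finset.sum_congr rfl fun x _ => by rw [Finset.mul_sum]
      rw [this, hsum z, mul_zero, add_zero]
    · intro a
      have key2 : ∀ c : Bool, (K + (s * ε) • D) a c false + (K + (s * ε) • D) a (!c) true ≤ 1 := by
        intro c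
        simp only [Pi.add_apply, Pi.smul_apply, smul_eq_mul]
        have h2 := hε2 a c
        have habs : s * ε * D a c false + s * ε * D a (!c) true
            ≤ ε * |D a c false + D a (!c) true| := by
          have : s * ε * D a c false + s * ε * D a (!c) true
              = s * ε * (D a c false + D a (!c) true) := by ring
          rw [this]
          calc s * ε * (D a c false + D a (!c) true)
              ≤ |s * ε * (D a c false + D a (!c) true)| := le_abs_self _
            _ = ε * |D a c false + D a (!c) true| := by
                rw [abs_mul, abs_mul, hsabs, one_mul, abs_of_pos hεpos]
        linarith
      constructor
      · have h := key2 false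
        simp only [Bool.not_false] at h
        exact h
      · have h := key2 true
        simp only [Bool.not_true] at h
        linarith
  -- conclude
  have hA := hmem 1 (Or.inl rfl)
  have hB := hmem (-1) (Or.inr rfl)
  have hseg : K ∈ openSegment ℝ (K + (1 * ε) • D) (K + (-1 * ε) • D) := by
    refine ⟨1/2, 1/2, by norm_num, by norm_num, by norm_num, ?_⟩
    funext a b c
    simp only [Pi.add_apply, Pi.smul_apply, smul_eq_mul]
    ring
  have := hext.2 hA hB hseg
  have hzero : (1 * ε) • D = 0 := by
    have : K + (1 * ε) • D = K + 0 := by rw [this, add_zero]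
    exact add_left_cancel this
  rw [one_mul] at hzero
  exact hD ((smul_eq_zero.1 hzero).resolve_left hεpos.ne')


lemma case1 (hext : K ∈ Set.extremePoints ℝ (IVPolytope n))
    {a a' : Fin n} {b b' z : Bool} (hne : (a', b') ≠ (a, b))
    (h0 : 0 < K a b z) (h0' : 0 < K a' b' z)
    (ht1 : K a b z + K a (!b) (!z) < 1)
    (ht2 : K a' b' z + K a' (!b') (!z) < 1) : False := by
  set D := ind a b z - ind a' b' z with hD
  have hDz : D = 0 := by
    apply key hext
    · intro zz
      simp only [hD, Pi.sub_apply, Finset.sum_sub_distrib]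
      rw [ind_sum, ind_sum]; ring
    · intro x y zz h
      by_cases hq1 : x = a ∧ y = b ∧ zz = z
      · obtain ⟨rfl, rfl, rfl⟩ := hq1; exact h0
      · by_cases hq2 : x = a' ∧ y = b' ∧ zz = z
        · obtain ⟨rfl, rfl, rfl⟩ := hq2; exact h0'
        · exact absurd (by simp [hD, ind, hq1, hq2]) h
    · intro x e
      have h1c := cons a b z x e
      have h2c := cons a' b' z x e
      by_cases hc1 : x = a ∧ e = (if z then !b else b)
      · by_cases hc2 : x = a' ∧ e = (if z then !b' else b')
        · left
          rw [if_pos hc1] at h1c; rw [if_pos hc2] at h2c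
          simp only [hD, Pi.sub_apply]; linarith
        · right
          rw [cons_val a b z x e hc1]; exact ht1
      · by_cases hc2 : x = a' ∧ e = (if z then !b' else b')
        · right
          rw [cons_val a' b' z x e hc2]; exact ht2
        · left
          rw [if_neg hc1] at h1c; rw [if_neg hc2] at h2c
          simp only [hD, Pi.sub_apply]; linarith
  have hone : D a b z = 1 := by
    have hne' : ¬(a = a' ∧ b = b') := by rintro ⟨rfl, rfl⟩; exact hne rfl
    simp [hD, ind, hne']
  rw [hDz] at hone; norm_num at hone


lemma bool_ne_not (w : Bool) : ¬(w = !w) := by cases w <;> simp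

lemma case2 (hext : K ∈ Set.extremePoints ℝ (IVPolytope n))
    {a a' : Fin n} {b b' z : Bool} (hne : (a', b') ≠ (a, b))
    (h0 : 0 < K a b z) (h1 : K a b z < 1)
    (h0' : 0 < K a' b' z) (h1' : K a' b' z < 1)
    (ht1 : K a b z + K a (!b) (!z) = 1)
    (ht2 : K a' b' z + K a' (!b') (!z) = 1) : False := by
  set D := (ind a b z - ind a (!b) (!z)) - (ind a' b' z - ind a' (!b') (!z)) with hD
  have hDz : D = 0 := by
    apply key hext
    · intro zz
      simp only [hD, Pi.sub_apply, Finset.sum_sub_distrib]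
      rw [ind_sum, ind_sum, ind_sum, ind_sum]; ring
    · intro x y zz h
      by_cases hq1 : x = a ∧ y = b ∧ zz = z
      · obtain ⟨rfl, rfl, rfl⟩ := hq1; exact h0
      · by_cases hq2 : x = a ∧ y = !b ∧ zz = !z
        · obtain ⟨rfl, rfl, rfl⟩ := hq2; linarith
        · by_cases hq3 : x = a' ∧ y = b' ∧ zz = z
          · obtain ⟨rfl, rfl, rfl⟩ := hq3; exact h0'
          · by_cases hq4 : x = a' ∧ y = !b' ∧ zz = !z
            · obtain ⟨rfl, rfl, rfl⟩ := hq4; linarith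
            · exact absurd (by simp [hD, ind, hq1, hq2, hq3, hq4]) h
    · intro x e
      left
      have hpp1 := cons_partner a b z x e
      have hpp2 := cons_partner a' b' z x e
      simp only [hD, Pi.sub_apply]; linarith
  have hone : D a b z = 1 := by
    have hne' : ¬(a = a' ∧ b = b') := by rintro ⟨rfl, rfl⟩; exact hne rfl
    simp [hD, ind, hne', bool_ne_not b, bool_ne_not z]
  rw [hDz] at hone; norm_num at hone

lemma case3 (hext : K ∈ Set.extremePoints ℝ (IVPolytope n))
    {a a' : Fin n} {b b' z : Bool} (hne : (a', b') ≠ (a, b))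
    (h0 : 0 < K a b z) (h1 : K a b z < 1) (h0' : 0 < K a' b' z)
    (ht1 : K a b z + K a (!b) (!z) = 1)
    (ht2 : K a' b' z + K a' (!b') (!z) < 1) : False := by
  have hK := hext.1
  have hp0 : 0 < K a (!b) (!z) := by linarith
  have hp1 : K a (!b) (!z) < 1 := by linarith
  obtain ⟨c, d, hcd, hq0, hq1⟩ := frac2 hK (!z) hp0 hp1
  have hne2 : ¬(a = c ∧ b = !d) := by
    rintro ⟨rfl, hbd⟩
    apply hcd
    have hdb : d = !b := by simp [hbd]
    rw [hdb]
  by_cases ht3 : K c d (!z) + K c (!d) (!(!z)) = 1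
  · -- second pair also tight
    have ht3' : K c d (!z) + K c (!d) z = 1 := by
      simpa only [Bool.not_not] using ht3
    set D := (ind a b z - ind a (!b) (!z)) - (ind c (!d) z - ind c d (!z)) with hD
    have hDz : D = 0 := by
      apply key hext
      · intro zz
        simp only [hD, Pi.sub_apply, Finset.sum_sub_distrib]
        rw [ind_sum, ind_sum, ind_sum, ind_sum]; ring
      · intro x y zz h
        by_cases hq1' : x = a ∧ y = b ∧ zz = z
        · obtain ⟨rfl, rfl, rfl⟩ := hq1'; exact h0
        · by_cases hq2 : x = a ∧ y = !b ∧ zz = !z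
          · obtain ⟨rfl, rfl, rfl⟩ := hq2; exact hp0
          · by_cases hq3 : x = c ∧ y = !d ∧ zz = z
            · obtain ⟨rfl, rfl, rfl⟩ := hq3; linarith
            · by_cases hq4 : x = c ∧ y = d ∧ zz = !z
              · obtain ⟨rfl, rfl, rfl⟩ := hq4; exact hq0
              · exact absurd (by simp [hD, ind, hq1', hq2, hq3, hq4]) h
      · intro x e
        left
        have hpp1 := cons_partner a b z x e
        have hpp2 := cons_partner c d (!z) x e
        simp only [Bool.not_not] at hpp2
        simp only [hD, Pi.sub_apply]; linarith
    have hone : D a b z = 1 := by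
      simp [hD, ind, hne2, bool_ne_not b, bool_ne_not z]
    rw [hDz] at hone; norm_num at hone
  · -- second pair slack
    have ht3' : K c d (!z) + K c (!d) (!(!z)) < 1 :=
      lt_of_le_of_ne (pairC_le hK c d (!z)) ht3
    set D := (ind a b z - ind a (!b) (!z)) - (ind a' b' z - ind c d (!z)) with hD
    have hDz : D = 0 := by
      apply key hext
      · intro zz
        simp only [hD, Pi.sub_apply, Finset.sum_sub_distrib]
        rw [ind_sum, ind_sum, ind_sum, ind_sum]; ring
      · intro x y zz h
        by_cases hq1' : x = a ∧ y = b ∧ zz = z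
        · obtain ⟨rfl, rfl, rfl⟩ := hq1'; exact h0
        · by_cases hq2 : x = a ∧ y = !b ∧ zz = !z
          · obtain ⟨rfl, rfl, rfl⟩ := hq2; exact hp0
          · by_cases hq3 : x = a' ∧ y = b' ∧ zz = z
            · obtain ⟨rfl, rfl, rfl⟩ := hq3; exact h0'
            · by_cases hq4 : x = c ∧ y = d ∧ zz = !z
              · obtain ⟨rfl, rfl, rfl⟩ := hq4; exact hq0
              · exact absurd (by simp [hD, ind, hq1', hq2, hq3, hq4]) h
      · intro x e
        have hpp1 := cons_partner a b z x e
        have h2c := cons a' b' z x e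
        have h3c := cons c d (!z) x e
        by_cases hc2 : x = a' ∧ e = (if z then !b' else b')
        · right
          rw [cons_val a' b' z x e hc2]; exact ht2
        · by_cases hc3 : x = c ∧ e = (if !z then !d else d)
          · right
            rw [cons_val c d (!z) x e hc3]; exact ht3'
          · left
            rw [if_neg hc2] at h2c; rw [if_neg hc3] at h3c
            simp only [hD, Pi.sub_apply]; linarith
    have hone : D a b z = 1 := by
      have hne' : ¬(a = a' ∧ b = b') := by rintro ⟨rfl, rfl⟩; exact hne rfl
      simp [hD, ind, hne', bool_ne_not b, bool_ne_not z]
    rw [hDz] at hone; norm_num at hone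

lemma integral (hext : K ∈ Set.extremePoints ℝ (IVPolytope n)) (a : Fin n) (b z : Bool) :
    K a b z = 0 ∨ K a b z = 1 := by
  have hK := hext.1
  by_contra h
  push_neg at h
  have h0 : 0 < K a b z := lt_of_le_of_ne (hK.1 a b z) (Ne.symm h.1)
  have h1 : K a b z < 1 := lt_of_le_of_ne (entry_le_one hK a b z) h.2
  obtain ⟨a', b', hne, h0', h1'⟩ := frac2 hK z h0 h1
  by_cases ht1 : K a b z + K a (!b) (!z) = 1
  · by_cases ht2 : K a' b' z + K a' (!b') (!z) = 1
    · exact case2 hext hne h0 h1 h0' h1' ht1 ht2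
    · exact case3 hext hne h0 h1 h0' ht1
        (lt_of_le_of_ne (pairC_le hK a' b' z) ht2)
  · have hs1 : K a b z + K a (!b) (!z) < 1 :=
      lt_of_le_of_ne (pairC_le hK a b z) ht1
    by_cases ht2 : K a' b' z + K a' (!b') (!z) = 1
    · exact case3 hext (Ne.symm hne) h0' h1' h0 ht2 hs1
    · exact case1 hext hne h0 h0' hs1
        (lt_of_le_of_ne (pairC_le hK a' b' z) ht2)



lemma delta01 {x x' : Fin n} {y y' : Bool} (a : Fin n) (b c : Bool) :
    deltaKernel x x' y y' a b c = 0 ∨ deltaKernel x x' y y' a b c = 1 := by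
  unfold deltaKernel
  split_ifs <;> simp

lemma delta_mem {x x' : Fin n} {y y' : Bool} (hcond : x ≠ x' ∨ y = y') :
    deltaKernel x x' y y' ∈ IVPolytope n := by
  refine ⟨?_, ?_, ?_⟩
  · intro a b c; unfold deltaKernel; split_ifs <;> norm_num
  · intro z
    cases z <;> simp [deltaKernel, ite_and, Finset.sum_ite_eq']
  · intro x0
    constructor
    · show (if (false : Bool) = false then _ else _) + (if (true : Bool) = false then _ else _) ≤ (1:ℝ)
      simp only [if_pos rfl, reduceIte]
      by_cases h1 : x0 = x ∧ false = y
      · by_cases h2 : x0 = x' ∧ true = y'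
        · exfalso
          rcases hcond with hk | hk
          · exact hk (h1.1 ▸ h2.1 ▸ rfl)
          · rw [← h1.2, ← h2.2] at hk; exact Bool.noConfusion hk
        · rw [if_pos h1, if_neg h2]; norm_num
      · by_cases h2 : x0 = x' ∧ true = y'
        · rw [if_neg h1, if_pos h2]; norm_num
        · rw [if_neg h1, if_neg h2]; norm_num
    · show (if (true : Bool) = false then _ else _) + (if (false : Bool) = false then _ else _) ≤ (1:ℝ)
      simp only [if_pos rfl, reduceIte]
      by_cases h1 : x0 = x ∧ true = y
      · by_cases h2 : x0 = x' ∧ false = y'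
        · exfalso
          rcases hcond with hk | hk
          · exact hk (h1.1 ▸ h2.1 ▸ rfl)
          · rw [← h1.2, ← h2.2] at hk; exact Bool.noConfusion hk
        · rw [if_pos h1, if_neg h2]; norm_num
      · by_cases h2 : x0 = x' ∧ false = y'
        · rw [if_neg h1, if_pos h2]; norm_num
        · rw [if_neg h1, if_neg h2]; norm_num

lemma delta_extreme {x x' : Fin n} {y y' : Bool} (hcond : x ≠ x' ∨ y = y') :
    deltaKernel x x' y y' ∈ Set.extremePoints ℝ (IVPolytope n) := by
  refine ⟨delta_mem hcond, ?_⟩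
  intro A hA B hB hseg
  obtain ⟨u, v, hu, hv, huv, heq⟩ := hseg
  have hKmem := delta_mem (n := n) hcond
  have main : ∀ a b c, A a b c = deltaKernel x x' y y' a b c ∧
      B a b c = deltaKernel x x' y y' a b c := by
    intro a b c
    have heqc : u * A a b c + v * B a b c = deltaKernel x x' y y' a b c := by
      have := congrFun (congrFun (congrFun heq a) b) c
      simpa using this
    have hA0 := hA.1 a b c
    have hB0 := hB.1 a b c
    have hA1 := entry_le_one hA a b c
    have hB1 := entry_le_one hB a b c
    rcases delta01 (x := x) (x' := x') (y := y) (y' := y') a b c with h | h <;> rw [h] at heqc ⊢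
    · constructor <;> nlinarith
    · constructor <;> nlinarith
  · funext a b c; exact (main a b c).1

lemma exists_one (hK : K ∈ IVPolytope n)
    (hint : ∀ a b z, K a b z = 0 ∨ K a b z = 1) (z : Bool) :
    ∃ a b, K a b z = 1 := by
  by_contra h
  push_neg at h
  have hz : ∀ a b, K a b z = 0 := fun a b => (hint a b z).resolve_right (h a b)
  have h0 : ∑ x, ∑ y, K x y z = 0 :=
    Finset.sum_eq_zero fun a _ => Finset.sum_eq_zero fun b _ => hz a b
  have h1 := hK.2.1 z
  rw [h0] at h1
  norm_num at h1

lemma forward (hext : K ∈ Set.extremePoints ℝ (IVPolytope n)) :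
    (∃ (x x' : Fin n) (y y' : Bool), x ≠ x' ∧ K = deltaKernel x x' y y')
      ∨ (∃ (x : Fin n) (y : Bool), K = deltaKernel x x y y) := by
  have hK := hext.1
  have hint : ∀ a b z, K a b z = 0 ∨ K a b z = 1 := fun a b z => integral hext a b z
  obtain ⟨x, y, hx⟩ := exists_one hK hint false
  obtain ⟨x', y', hx'⟩ := exists_one hK hint true
  have hKeq : K = deltaKernel x x' y y' := by
    funext a b c
    have huniq : ∀ (p q : Fin n) (r s w : Bool), K p r w = 1 → ¬(q = p ∧ s = r) →
        K q s w = 0 := by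
      intro p q r s w h1 h2
      rcases hint q s w with h0 | h0
      · exact h0
      · exfalso
        have hne : (q, s) ≠ (p, r) := by simpa [Prod.ext_iff] using h2
        have := pair_le hK w hne
        rw [h0, h1] at this
        norm_num at this
    cases c
    · show K a b false = if (false : Bool) = false then _ else _
      rw [if_pos rfl]
      by_cases hab : a = x ∧ b = y
      · obtain ⟨rfl, rfl⟩ := hab; rw [if_pos ⟨rfl, rfl⟩]; exact hx
      · rw [if_neg hab]; exact huniq x a y b false hx hab
    · show K a b true = if (true : Bool) = false then _ else _
      rw [if_neg (by simp)]
      by_cases hab : a = x' ∧ b = y'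
      · obtain ⟨rfl, rfl⟩ := hab; rw [if_pos ⟨rfl, rfl⟩]; exact hx'
      · rw [if_neg hab]; exact huniq x' a y' b true hx' hab
  by_cases hxx : x = x'
  · subst hxx
    by_cases hyy : y = y'
    · subst hyy; exact Or.inr ⟨x, y, hKeq⟩
    · exfalso
      have hyy' : y' = !y := by cases y <;> cases y' <;> simp_all
      have hcv := hC hK x y
      rw [hx] at hcv
      rw [← hyy'] at hcv
      rw [hx'] at hcv
      norm_num at hcv
  · exact Or.inl ⟨x, x', y, y', hxx, hKeq⟩

end IVaux

/-- The extreme points of the IV polytope are exactly: (i) the deterministic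
kernels `δ_{x,y|0} + δ_{x',y'|1}` with `x ≠ x'`, and (ii) the kernels
`δ_{x,y|0} + δ_{x,y|1}` assigning the same point mass for both values of `Z`. -/
theorem stmt4 (n : ℕ) (hn : 2 ≤ n) :
    Set.extremePoints ℝ (IVPolytope n) =
      {K | (∃ (x x' : Fin n) (y y' : Bool), x ≠ x' ∧ K = deltaKernel x x' y y')
        ∨ (∃ (x : Fin n) (y : Bool), K = deltaKernel x x y y)} := by
  ext K
  constructor
  · intro hext
    exact IVaux.forward hext
  · rintro (⟨x, x', y, y', hne, rfl⟩ | ⟨x, y, rfl⟩)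
    · exact IVaux.delta_extreme (Or.inl hne)
    · exact IVaux.delta_extreme (Or.inr rfl)
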